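/- Let n, m ≥ 1, c, b̌₁, b̌₂ > 0, and let A₁, A₂ : ℕ × ℕ → M_n(ℝ), a₁, a₂ : ℕ × ℕ → ℝ with a₁, a₂ ≥ 0, Q₁, Q₂ : ℕ × ℕ → M_n(ℝ) with positive semidefinite values, C : ℕ × ℕ → M_{m×n}(ℝ), Θ₀ : ℕ × ℕ → M_m(ℝ) with positive definite values, D : ℕ × ℕ → M_m(ℝ), H₁,…,H_r ∈ M_{n×m}(ℝ), and β₁,…,β_r ≥ 0. For δ : ℕ × ℕ → M_m(ℝ) with positive semidefinite values, define recursively Ξ_u^δ : ℕ × ℕ → M_n(ℝ) by prescribed boundary values Ξ_u^δ(l,0) = G_h(l) and Ξ_u^δ(0,k) = G_v(k) (positive semidefinite, independent of δ), and for l, k ≥ 1: Ξ_p^δ(l,k) = (1 + b̌₁) Φ₁(Ξ_u^δ)(l,k−1) + (1 + b̌₁⁻¹) Φ₂(Ξ_u^δ)(l−1,k) + Q₁(l,k−1) + Q₂(l−1,k), where Φ_ι(M)(l,k) = (1 + b̌₂) a_ι(l,k)² tr(M(l,k)) I + (1 + b̌₂⁻¹) A_ι(l,k) M(l,k) A_ι(l,k)ᵀ,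 and Ξ_u^δ(l,k) = (1 + c) Ξ_p^δ(l,k) − (1 + c)² Ξ_p^δ(l,k) C(l,k)ᵀ F_δ(l,k)⁻¹ C(l,k) Ξ_p^δ(l,k) + Σ_{ν=1}^{r} β_ν H_ν F_δ(l,k) H_νᵀ with F_δ(l,k) = Θ₀(l,k) + D(l,k) δ(l,k) D(l,k)ᵀ + (1 + c) C(l,k) Ξ_p^δ(l,k) C(l,k)ᵀ. If δ¹(l,k) ⪯ δ²(l,k) for all (l,k), then Ξ_u^{δ¹}(l,k) ⪯ Ξ_u^{δ²}(l,k) for all (l,k) ∈ ℕ × ℕ. -/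

import Mathlib

open Matrix

/-- The one-step map `Φ_ι(M)(l,k) = (1 + b̌₂) a_ι(l,k)² tr(M(l,k)) I
+ (1 + b̌₂⁻¹) A_ι(l,k) M(l,k) A_ι(l,k)ᵀ` of the prediction step. -/
noncomputable def predMap {n : ℕ} (cb₂ : ℝ)
    (A : ℕ × ℕ → Matrix (Fin n) (Fin n) ℝ) (a : ℕ × ℕ → ℝ)
    (M : ℕ × ℕ → Matrix (Fin n) (Fin n) ℝ) (p : ℕ × ℕ) :
    Matrix (Fin n) (Fin n) ℝ :=
  ((1 + cb₂) * (a p) ^ 2 * (M p).trace) • (1 : Matrix (Fin n) (Fin n) ℝ)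
    + (1 + cb₂⁻¹) • (A p * M p * (A p)ᵀ)

/-- The innovation matrix `F_δ(l,k) = Θ₀(l,k) + D(l,k) δ(l,k) D(l,k)ᵀ
+ (1 + c) C(l,k) Ξ_p(l,k) C(l,k)ᵀ`. -/
noncomputable def innovMatδ {n m : ℕ} (c : ℝ)
    (C : ℕ × ℕ → Matrix (Fin m) (Fin n) ℝ)
    (Θ₀ D : ℕ × ℕ → Matrix (Fin m) (Fin m) ℝ)
    (δ : ℕ × ℕ → Matrix (Fin m) (Fin m) ℝ)
    (Ξp : ℕ × ℕ → Matrix (Fin n) (Fin n) ℝ) (p : ℕ × ℕ) :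
    Matrix (Fin m) (Fin m) ℝ :=
  Θ₀ p + D p * δ p * (D p)ᵀ + (1 + c) • (C p * Ξp p * (C p)ᵀ)

/-- The minimized update `Ξ_u(l,k) = (1 + c) Ξ_p(l,k)
- (1 + c)² Ξ_p(l,k) C(l,k)ᵀ F_δ(l,k)⁻¹ C(l,k) Ξ_p(l,k)
+ Σ_ν β_ν H_ν F_δ(l,k) H_νᵀ`. -/
noncomputable def updateδ {n m r : ℕ} (c : ℝ)
    (C : ℕ × ℕ → Matrix (Fin m) (Fin n) ℝ)
    (Θ₀ D : ℕ × ℕ → Matrix (Fin m) (Fin m) ℝ)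
    (H : Fin r → Matrix (Fin n) (Fin m) ℝ) (β : Fin r → ℝ)
    (δ : ℕ × ℕ → Matrix (Fin m) (Fin m) ℝ)
    (Ξp : ℕ × ℕ → Matrix (Fin n) (Fin n) ℝ) (p : ℕ × ℕ) :
    Matrix (Fin n) (Fin n) ℝ :=
  (1 + c) • Ξp p
    - ((1 + c) ^ 2) • (Ξp p * (C p)ᵀ * (innovMatδ c C Θ₀ D δ Ξp p)⁻¹ * C p * Ξp p)
    + ∑ ν : Fin r, β ν • (H ν * innovMatδ c C Θ₀ D δ Ξp p * (H ν)ᵀ)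


set_option linter.unusedSectionVars false
set_option maxHeartbeats 1000000

section CORE
variable {n m : Type*} [Fintype n] [Fintype m] [DecidableEq n] [DecidableEq m]

lemma mysym0 {P : Matrix n n ℝ} (hP : P.IsHermitian) : Pᵀ = P := by
  rw [← Matrix.conjTranspose_eq_transpose_of_trivial]; exact hP.eq

lemma mypsd_conj {P : Matrix n n ℝ} (hP : P.PosSemidef) (B : Matrix m n ℝ) :
    (B * P * Bᵀ).PosSemidef := by
  simpa [← Matrix.conjTranspose_eq_transpose_of_trivial] using hP.mul_mul_conjTranspose_same B

lemma mypsd_smul {P : Matrix n n ℝ} (hP : P.PosSemidef) {a : ℝ} (ha : 0 ≤ a) :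
    (a • P).PosSemidef := by
  refine ⟨?_, fun x => ?_⟩
  · simp [Matrix.IsHermitian, conjTranspose_smul, mysym0 hP.1]
  · exact (hP.smul ha).2 x

lemma mypsd_trace_nonneg {P : Matrix n n ℝ} (hP : P.PosSemidef) : 0 ≤ P.trace := by
  rw [Matrix.trace]
  refine Finset.sum_nonneg fun i _ => ?_
  exact hP.diag_nonneg

lemma mypsd_sum {r : ℕ} (M : Fin r → Matrix n n ℝ) (h : ∀ i, (M i).PosSemidef) :
    (∑ i, M i).PosSemidef := by
  classical
  exact Finset.sum_induction M _ (fun a b ha hb => ha.add hb) Matrix.PosSemidef.zero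
    (fun i _ => h i)

noncomputable def Fmat (c : ℝ) (C : Matrix m n ℝ) (Θ Dm d : Matrix m m ℝ)
    (P : Matrix n n ℝ) : Matrix m m ℝ :=
  Θ + Dm * d * Dmᵀ + (1 + c) • (C * P * Cᵀ)

noncomputable def Jmap (c : ℝ) (C : Matrix m n ℝ) (Θ Dm d : Matrix m m ℝ)
    (P : Matrix n n ℝ) (K : Matrix n m ℝ) : Matrix n n ℝ :=
  (1+c) • P - (1+c) • (K * C * P) - ((1+c) • (K * C * P))ᵀ + K * Fmat c C Θ Dm d P * Kᵀ

noncomputable def valm (c : ℝ) (C : Matrix m n ℝ) (Θ Dm d : Matrix m m ℝ)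
    (P : Matrix n n ℝ) : Matrix n n ℝ :=
  (1+c) • P - ((1+c)^2) • (P * Cᵀ * (Fmat c C Θ Dm d P)⁻¹ * C * P)

lemma Jsq {c : ℝ} {C : Matrix m n ℝ} {Θ Dm d : Matrix m m ℝ} {P : Matrix n n ℝ}
    (hP : Pᵀ = P) (K : Matrix n m ℝ) :
    Jmap c C Θ Dm d P K
      = (1+c) • ((1 - K * C) * P * (1 - K * C)ᵀ) + K * (Θ + Dm * d * Dmᵀ) * Kᵀ := by
  simp only [Jmap, Fmat, transpose_sub, transpose_one, transpose_mul, transpose_smul,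
    Matrix.sub_mul, Matrix.mul_sub, Matrix.add_mul, Matrix.mul_add, Matrix.one_mul,
    Matrix.mul_one, Matrix.smul_mul, Matrix.mul_smul, smul_sub, hP, Matrix.mul_assoc]
  abel

lemma Jdiff {c : ℝ} {C : Matrix m n ℝ} {Θ Dm d₁ d₂ : Matrix m m ℝ} {P₁ P₂ : Matrix n n ℝ}
    (hP₁ : P₁ᵀ = P₁) (hP₂ : P₂ᵀ = P₂) (K : Matrix n m ℝ) :
    Jmap c C Θ Dm d₂ P₂ K - Jmap c C Θ Dm d₁ P₁ K =
      (1+c) • ((1 - K*C) * (P₂ - P₁) * (1 - K*C)ᵀ) + K * (Dm * (d₂ - d₁) * Dmᵀ) * Kᵀ := by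
  rw [Jsq hP₂, Jsq hP₁]
  simp only [Matrix.mul_sub, Matrix.sub_mul, Matrix.mul_add, Matrix.add_mul, smul_sub]
  abel

lemma compl_sq {c : ℝ} {C : Matrix m n ℝ} {Θ Dm d : Matrix m m ℝ} {P : Matrix n n ℝ}
    (hP : Pᵀ = P) (hFs : (Fmat c C Θ Dm d P)ᵀ = Fmat c C Θ Dm d P)
    (hu : IsUnit (Fmat c C Θ Dm d P).det) (K : Matrix n m ℝ) :
    Jmap c C Θ Dm d P K - valm c C Θ Dm d P =
      (K - (1+c) • (P * Cᵀ * (Fmat c C Θ Dm d P)⁻¹)) * Fmat c C Θ Dm d P *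
      (K - (1+c) • (P * Cᵀ * (Fmat c C Θ Dm d P)⁻¹))ᵀ := by
  set F := Fmat c C Θ Dm d P with hF
  have hFF : F * F⁻¹ = 1 := Matrix.mul_nonsing_inv F hu
  have hFiF : F⁻¹ * F = 1 := Matrix.nonsing_inv_mul F hu
  have hFit : (F⁻¹)ᵀ = F⁻¹ := by rw [Matrix.transpose_nonsing_inv, hFs]
  have hK0t : ((1+c) • (P * Cᵀ * F⁻¹))ᵀ = (1+c) • (F⁻¹ * C * P) := by
    rw [transpose_smul, transpose_mul, transpose_mul, transpose_transpose, hFit, hP,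
      ← Matrix.mul_assoc]
  have e1 : ((1+c) • (P * Cᵀ * F⁻¹)) * F = (1+c) • (P * Cᵀ) := by
    rw [Matrix.smul_mul, Matrix.mul_assoc, hFiF, Matrix.mul_one]
  have hcancel : F * (F⁻¹ * (C * P)) = C * P := by
    rw [← Matrix.mul_assoc, hFF, Matrix.one_mul]
  have e2 : K * F * ((1+c) • (F⁻¹ * C * P)) = (1+c) • (K * C * P) := by
    rw [Matrix.mul_smul]
    congr 1
    simp only [Matrix.mul_assoc, hcancel]
  have e3 : ((1+c) • (P * Cᵀ)) * Kᵀ = ((1+c) • (K * C * P))ᵀ := by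
    rw [transpose_smul, transpose_mul, transpose_mul, hP, Matrix.smul_mul, Matrix.mul_assoc]
  have e4 : ((1+c) • (P * Cᵀ)) * ((1+c) • (F⁻¹ * C * P))
      = ((1+c)^2) • (P * Cᵀ * F⁻¹ * C * P) := by
    rw [Matrix.smul_mul, Matrix.mul_smul, smul_smul, ← sq]
    congr 1
    simp only [Matrix.mul_assoc]
  have hRHS : (K - (1+c) • (P * Cᵀ * F⁻¹)) * F * (K - (1+c) • (P * Cᵀ * F⁻¹))ᵀ
      = K * F * Kᵀ - (1+c) • (K*C*P) - ((1+c) • (K*C*P))ᵀ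
        + ((1+c)^2) • (P * Cᵀ * F⁻¹ * C * P) := by
    rw [transpose_sub, hK0t, Matrix.sub_mul, e1, Matrix.mul_sub, Matrix.sub_mul, Matrix.sub_mul,
      e2, e3, e4]
    abel
  rw [hRHS]
  simp only [Jmap, valm, ← hF]
  abel

variable {c : ℝ} {C : Matrix m n ℝ} {Θ Dm : Matrix m m ℝ}

lemma Fmat_posdef (hc : 0 < c) {d : Matrix m m ℝ} {P : Matrix n n ℝ}
    (hΘ : Θ.PosDef) (hd : d.PosSemidef) (hP : P.PosSemidef) :
    (Fmat c C Θ Dm d P).PosDef :=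
  (hΘ.add_posSemidef (mypsd_conj hd Dm)).add_posSemidef
    (mypsd_smul (mypsd_conj hP C) (by linarith))

lemma Jmap_psd (hc : 0 < c) {d : Matrix m m ℝ} {P : Matrix n n ℝ}
    (hΘ : Θ.PosDef) (hd : d.PosSemidef) (hP : P.PosSemidef) (K : Matrix n m ℝ) :
    (Jmap c C Θ Dm d P K).PosSemidef := by
  rw [Jsq (mysym0 hP.1)]
  exact (mypsd_smul (mypsd_conj hP _) (by linarith)).add
    (mypsd_conj ((hΘ.posSemidef).add (mypsd_conj hd Dm)) K)

lemma valm_eq (hc : 0 < c) {d : Matrix m m ℝ} {P : Matrix n n ℝ}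
    (hΘ : Θ.PosDef) (hd : d.PosSemidef) (hP : P.PosSemidef) :
    valm c C Θ Dm d P
      = Jmap c C Θ Dm d P ((1+c) • (P * Cᵀ * (Fmat c C Θ Dm d P)⁻¹)) := by
  have hFpd := Fmat_posdef hc hΘ hd hP (C := C) (Dm := Dm)
  have h := compl_sq (mysym0 hP.1) (mysym0 hFpd.posSemidef.1) hFpd.det_pos.ne'.isUnit
    ((1+c) • (P * Cᵀ * (Fmat c C Θ Dm d P)⁻¹))
  rw [sub_self, Matrix.zero_mul, Matrix.zero_mul] at h
  exact (sub_eq_zero.mp h).symm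

lemma valm_psd (hc : 0 < c) {d : Matrix m m ℝ} {P : Matrix n n ℝ}
    (hΘ : Θ.PosDef) (hd : d.PosSemidef) (hP : P.PosSemidef) :
    (valm c C Θ Dm d P).PosSemidef := by
  rw [valm_eq hc hΘ hd hP]
  exact Jmap_psd hc hΘ hd hP _

lemma update_core_psd (hc : 0 < c) {d : Matrix m m ℝ} {P : Matrix n n ℝ}
    (hΘ : Θ.PosDef) (hd : d.PosSemidef) (hP : P.PosSemidef)
    {r : ℕ} (H : Fin r → Matrix n m ℝ) (β : Fin r → ℝ) (hβ : ∀ ν, 0 ≤ β ν) :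
    (valm c C Θ Dm d P + ∑ ν, β ν • (H ν * Fmat c C Θ Dm d P * (H ν)ᵀ)).PosSemidef :=
  (valm_psd hc hΘ hd hP).add (mypsd_sum _ fun ν =>
    mypsd_smul (mypsd_conj (Fmat_posdef hc hΘ hd hP).posSemidef (H ν)) (hβ ν))

lemma update_core_mono (hc : 0 < c) {d₁ d₂ : Matrix m m ℝ} {P₁ P₂ : Matrix n n ℝ}
    (hΘ : Θ.PosDef) (hd₁ : d₁.PosSemidef) (hd₂ : d₂.PosSemidef)
    (hdd : (d₂ - d₁).PosSemidef) (hP₁ : P₁.PosSemidef) (hP₂ : P₂.PosSemidef)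
    (hPP : (P₂ - P₁).PosSemidef)
    {r : ℕ} (H : Fin r → Matrix n m ℝ) (β : Fin r → ℝ) (hβ : ∀ ν, 0 ≤ β ν) :
    ((valm c C Θ Dm d₂ P₂ + ∑ ν, β ν • (H ν * Fmat c C Θ Dm d₂ P₂ * (H ν)ᵀ))
      - (valm c C Θ Dm d₁ P₁ + ∑ ν, β ν • (H ν * Fmat c C Θ Dm d₁ P₁ * (H ν)ᵀ))).PosSemidef := by
  set K₂ := (1+c) • (P₂ * Cᵀ * (Fmat c C Θ Dm d₂ P₂)⁻¹) with hK₂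
  have hF1pd := Fmat_posdef hc hΘ hd₁ hP₁ (C := C) (Dm := Dm)
  have A1 : (Jmap c C Θ Dm d₁ P₁ K₂ - valm c C Θ Dm d₁ P₁).PosSemidef := by
    rw [compl_sq (mysym0 hP₁.1) (mysym0 hF1pd.posSemidef.1) hF1pd.det_pos.ne'.isUnit K₂]
    exact mypsd_conj hF1pd.posSemidef _
  have A2 : (Jmap c C Θ Dm d₂ P₂ K₂ - Jmap c C Θ Dm d₁ P₁ K₂).PosSemidef := by
    rw [Jdiff (mysym0 hP₁.1) (mysym0 hP₂.1) K₂]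
    exact (mypsd_smul (mypsd_conj hPP _) (by linarith)).add
      (mypsd_conj (mypsd_conj hdd Dm) K₂)
  have hFdiff : Fmat c C Θ Dm d₂ P₂ - Fmat c C Θ Dm d₁ P₁
      = Dm * (d₂ - d₁) * Dmᵀ + (1+c) • (C * (P₂ - P₁) * Cᵀ) := by
    simp only [Fmat, Matrix.mul_sub, Matrix.sub_mul, smul_sub]
    abel
  have A3 : ((∑ ν, β ν • (H ν * Fmat c C Θ Dm d₂ P₂ * (H ν)ᵀ))
      - ∑ ν, β ν • (H ν * Fmat c C Θ Dm d₁ P₁ * (H ν)ᵀ)).PosSemidef := by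
    rw [← Finset.sum_sub_distrib]
    refine mypsd_sum _ fun ν => ?_
    rw [← smul_sub, ← Matrix.sub_mul, ← Matrix.mul_sub, hFdiff]
    refine mypsd_smul ?_ (hβ ν)
    exact mypsd_conj ((mypsd_conj hdd Dm).add
      (mypsd_smul (mypsd_conj hPP C) (show (0:ℝ) ≤ 1 + c by linarith))) (H ν)
  have key : (valm c C Θ Dm d₂ P₂ + ∑ ν, β ν • (H ν * Fmat c C Θ Dm d₂ P₂ * (H ν)ᵀ))
      - (valm c C Θ Dm d₁ P₁ + ∑ ν, β ν • (H ν * Fmat c C Θ Dm d₁ P₁ * (H ν)ᵀ))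
      = ((Jmap c C Θ Dm d₂ P₂ K₂ - Jmap c C Θ Dm d₁ P₁ K₂)
          + (Jmap c C Θ Dm d₁ P₁ K₂ - valm c C Θ Dm d₁ P₁))
        + ((∑ ν, β ν • (H ν * Fmat c C Θ Dm d₂ P₂ * (H ν)ᵀ))
          - ∑ ν, β ν • (H ν * Fmat c C Θ Dm d₁ P₁ * (H ν)ᵀ)) := by
    rw [valm_eq hc hΘ hd₂ hP₂, ← hK₂]
    abel
  rw [key]
  exact (A2.add A1).add A3
end CORE

lemma pred_psd {n : ℕ} {cb₂ : ℝ} (hcb₂ : 0 < cb₂)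
    (A : ℕ × ℕ → Matrix (Fin n) (Fin n) ℝ) (a : ℕ × ℕ → ℝ)
    (M : ℕ × ℕ → Matrix (Fin n) (Fin n) ℝ) (p : ℕ × ℕ) (hM : (M p).PosSemidef) :
    (predMap cb₂ A a M p).PosSemidef := by
  have ht := mypsd_trace_nonneg hM
  have h2 : (0:ℝ) < cb₂⁻¹ := by positivity
  refine (mypsd_smul Matrix.PosSemidef.one ?_).add (mypsd_smul (mypsd_conj hM (A p)) ?_)
  · exact mul_nonneg (mul_nonneg (by linarith) (sq_nonneg _)) ht
  · linarith

lemma pred_sub {n : ℕ} (cb₂ : ℝ)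
    (A : ℕ × ℕ → Matrix (Fin n) (Fin n) ℝ) (a : ℕ × ℕ → ℝ)
    (M₁ M₂ : ℕ × ℕ → Matrix (Fin n) (Fin n) ℝ) (p : ℕ × ℕ) :
    predMap cb₂ A a M₂ p - predMap cb₂ A a M₁ p
      = ((1 + cb₂) * (a p) ^ 2 * (M₂ p - M₁ p).trace) • (1 : Matrix (Fin n) (Fin n) ℝ)
        + (1 + cb₂⁻¹) • (A p * (M₂ p - M₁ p) * (A p)ᵀ) := by
  simp only [predMap, Matrix.trace_sub, mul_sub, sub_smul, smul_sub,
    Matrix.mul_sub, Matrix.sub_mul]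
  abel

lemma pred_mono {n : ℕ} {cb₂ : ℝ} (hcb₂ : 0 < cb₂)
    (A : ℕ × ℕ → Matrix (Fin n) (Fin n) ℝ) (a : ℕ × ℕ → ℝ)
    (M₁ M₂ : ℕ × ℕ → Matrix (Fin n) (Fin n) ℝ) (p : ℕ × ℕ)
    (hM : (M₂ p - M₁ p).PosSemidef) :
    (predMap cb₂ A a M₂ p - predMap cb₂ A a M₁ p).PosSemidef := by
  have ht := mypsd_trace_nonneg hM
  have h2 : (0:ℝ) < cb₂⁻¹ := by positivity
  rw [pred_sub]
  refine (mypsd_smul Matrix.PosSemidef.one ?_).add (mypsd_smul (mypsd_conj hM (A p)) ?_)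
  · exact mul_nonneg (mul_nonneg (by linarith) (sq_nonneg _)) ht
  · linarith

lemma updateδ_eq {n m r : ℕ} (c : ℝ)
    (C : ℕ × ℕ → Matrix (Fin m) (Fin n) ℝ)
    (Θ₀ D : ℕ × ℕ → Matrix (Fin m) (Fin m) ℝ)
    (H : Fin r → Matrix (Fin n) (Fin m) ℝ) (β : Fin r → ℝ)
    (δ : ℕ × ℕ → Matrix (Fin m) (Fin m) ℝ)
    (Ξp : ℕ × ℕ → Matrix (Fin n) (Fin n) ℝ) (p : ℕ × ℕ) :
    updateδ c C Θ₀ D H β δ Ξp p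
      = valm c (C p) (Θ₀ p) (D p) (δ p) (Ξp p)
        + ∑ ν, β ν • (H ν * Fmat c (C p) (Θ₀ p) (D p) (δ p) (Ξp p) * (H ν)ᵀ) := rfl

/-- Monotonicity of the minimized filtering-error covariance bound of the
event-triggered recursive filter for the 2-D system with respect to the
triggering-error covariance bound: if `δ¹(l,k) ⪯ δ²(l,k)` for all `(l,k)`, then
the recursively defined bounds satisfy `Ξ_u^{δ¹}(l,k) ⪯ Ξ_u^{δ²}(l,k)` everywhere. -/
theorem filter_bound_monotone_in_trigger_error
    {n m r : ℕ} (hn : 1 ≤ n) (hm : 1 ≤ m)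
    (c cb₁ cb₂ : ℝ) (hc : 0 < c) (hcb₁ : 0 < cb₁) (hcb₂ : 0 < cb₂)
    (A₁ A₂ : ℕ × ℕ → Matrix (Fin n) (Fin n) ℝ)
    (a₁ a₂ : ℕ × ℕ → ℝ) (ha₁ : ∀ p, 0 ≤ a₁ p) (ha₂ : ∀ p, 0 ≤ a₂ p)
    (Q₁ Q₂ : ℕ × ℕ → Matrix (Fin n) (Fin n) ℝ)
    (hQ₁ : ∀ p, (Q₁ p).PosSemidef) (hQ₂ : ∀ p, (Q₂ p).PosSemidef)
    (C : ℕ × ℕ → Matrix (Fin m) (Fin n) ℝ)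
    (Θ₀ : ℕ × ℕ → Matrix (Fin m) (Fin m) ℝ) (hΘ₀ : ∀ p, (Θ₀ p).PosDef)
    (D : ℕ × ℕ → Matrix (Fin m) (Fin m) ℝ)
    (H : Fin r → Matrix (Fin n) (Fin m) ℝ)
    (β : Fin r → ℝ) (hβ : ∀ ν, 0 ≤ β ν)
    (Gh Gv : ℕ → Matrix (Fin n) (Fin n) ℝ)
    (hGh : ∀ l, (Gh l).PosSemidef) (hGv : ∀ k, (Gv k).PosSemidef)
    (δ₁ δ₂ : ℕ × ℕ → Matrix (Fin m) (Fin m) ℝ)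
    (hδ₁ : ∀ p, (δ₁ p).PosSemidef) (hδ₂ : ∀ p, (δ₂ p).PosSemidef)
    (hδ : ∀ p, (δ₂ p - δ₁ p).PosSemidef)
    (Ξp₁ Ξu₁ Ξp₂ Ξu₂ : ℕ × ℕ → Matrix (Fin n) (Fin n) ℝ)
    (hbd₁h : ∀ l : ℕ, Ξu₁ (l, 0) = Gh l) (hbd₁v : ∀ k : ℕ, Ξu₁ (0, k) = Gv k)
    (hbd₂h : ∀ l : ℕ, Ξu₂ (l, 0) = Gh l) (hbd₂v : ∀ k : ℕ, Ξu₂ (0, k) = Gv k)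
    (hp₁ : ∀ l k : ℕ, 1 ≤ l → 1 ≤ k →
      Ξp₁ (l, k) = (1 + cb₁) • predMap cb₂ A₁ a₁ Ξu₁ (l, k - 1)
        + (1 + cb₁⁻¹) • predMap cb₂ A₂ a₂ Ξu₁ (l - 1, k)
        + Q₁ (l, k - 1) + Q₂ (l - 1, k))
    (hp₂ : ∀ l k : ℕ, 1 ≤ l → 1 ≤ k →
      Ξp₂ (l, k) = (1 + cb₁) • predMap cb₂ A₁ a₁ Ξu₂ (l, k - 1)
        + (1 + cb₁⁻¹) • predMap cb₂ A₂ a₂ Ξu₂ (l - 1, k)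
        + Q₁ (l, k - 1) + Q₂ (l - 1, k))
    (hu₁ : ∀ l k : ℕ, 1 ≤ l → 1 ≤ k →
      Ξu₁ (l, k) = updateδ c C Θ₀ D H β δ₁ Ξp₁ (l, k))
    (hu₂ : ∀ l k : ℕ, 1 ≤ l → 1 ≤ k →
      Ξu₂ (l, k) = updateδ c C Θ₀ D H β δ₂ Ξp₂ (l, k)) :
    ∀ p : ℕ × ℕ, (Ξu₂ p - Ξu₁ p).PosSemidef := by
  have h1c : (0:ℝ) ≤ 1 + cb₁ := by linarith
  have h2c : (0:ℝ) ≤ 1 + cb₁⁻¹ := by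
    have : (0:ℝ) < cb₁⁻¹ := by positivity
    linarith
  have key : ∀ N : ℕ, ∀ p : ℕ × ℕ, p.1 + p.2 ≤ N →
      (Ξu₁ p).PosSemidef ∧ (Ξu₂ p).PosSemidef ∧ (Ξu₂ p - Ξu₁ p).PosSemidef := by
    intro N
    induction N with
    | zero =>
      rintro ⟨l, k⟩ hp
      have h0 : l + k ≤ 0 := hp
      have hl : l = 0 := by omega
      have hk : k = 0 := by omega
      subst hl; subst hk
      refine ⟨by rw [hbd₁v 0]; exact hGv 0, by rw [hbd₂v 0]; exact hGv 0, ?_⟩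
      rw [hbd₁v 0, hbd₂v 0, sub_self]
      exact Matrix.PosSemidef.zero
    | succ N ih =>
      rintro ⟨l, k⟩ hp
      have h0 : l + k ≤ N + 1 := hp
      rcases Nat.eq_zero_or_pos l with hl | hl
      · subst hl
        refine ⟨by rw [hbd₁v k]; exact hGv k, by rw [hbd₂v k]; exact hGv k, ?_⟩
        rw [hbd₁v k, hbd₂v k, sub_self]
        exact Matrix.PosSemidef.zero
      rcases Nat.eq_zero_or_pos k with hk | hk
      · subst hk
        refine ⟨by rw [hbd₁h l]; exact hGh l, by rw [hbd₂h l]; exact hGh l, ?_⟩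
        rw [hbd₁h l, hbd₂h l, sub_self]
        exact Matrix.PosSemidef.zero
      have H1 := ih (l, k - 1) (by show l + (k - 1) ≤ N; omega)
      have H2 := ih (l - 1, k) (by show l - 1 + k ≤ N; omega)
      have hp1 := hp₁ l k hl hk
      have hp2 := hp₂ l k hl hk
      have hP1 : (Ξp₁ (l, k)).PosSemidef := by
        rw [hp1]
        exact (((mypsd_smul (pred_psd hcb₂ A₁ a₁ Ξu₁ _ H1.1) h1c).add
          (mypsd_smul (pred_psd hcb₂ A₂ a₂ Ξu₁ _ H2.1) h2c)).add (hQ₁ _)).add (hQ₂ _)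
      have hP2 : (Ξp₂ (l, k)).PosSemidef := by
        rw [hp2]
        exact (((mypsd_smul (pred_psd hcb₂ A₁ a₁ Ξu₂ _ H1.2.1) h1c).add
          (mypsd_smul (pred_psd hcb₂ A₂ a₂ Ξu₂ _ H2.2.1) h2c)).add (hQ₁ _)).add (hQ₂ _)
      have hPd : (Ξp₂ (l, k) - Ξp₁ (l, k)).PosSemidef := by
        have hsub : Ξp₂ (l, k) - Ξp₁ (l, k)
            = (1 + cb₁) • (predMap cb₂ A₁ a₁ Ξu₂ (l, k - 1) - predMap cb₂ A₁ a₁ Ξu₁ (l, k - 1))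
              + (1 + cb₁⁻¹) • (predMap cb₂ A₂ a₂ Ξu₂ (l - 1, k)
                - predMap cb₂ A₂ a₂ Ξu₁ (l - 1, k)) := by
          rw [hp1, hp2]
          simp only [smul_sub]
          abel
        rw [hsub]
        exact (mypsd_smul (pred_mono hcb₂ A₁ a₁ Ξu₁ Ξu₂ _ H1.2.2) h1c).add
          (mypsd_smul (pred_mono hcb₂ A₂ a₂ Ξu₁ Ξu₂ _ H2.2.2) h2c)
      rw [hu₁ l k hl hk, hu₂ l k hl hk, updateδ_eq, updateδ_eq]
      exact ⟨update_core_psd hc (hΘ₀ _) (hδ₁ _) hP1 H β hβ,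
        update_core_psd hc (hΘ₀ _) (hδ₂ _) hP2 H β hβ,
        update_core_mono hc (hΘ₀ _) (hδ₁ _) (hδ₂ _) (hδ _) hP1 hP2 hPd H β hβ⟩
  intro p
  exact (key (p.1 + p.2) p le_rfl).2.2
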